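/- Let α = (α_1,...,α_k) be a composition of n and Λ = (λ^{[1]},...,λ^{[k]}) ⊢ α. Then 2·Σ exc(s,π) = (n − m_1(Λ))·(n−1)!·z_Λ, where the sum runs over all pairs (s,π) with s an n-cycle on [n] and π a permutation of [n] of α-type Λ. -/

import Mathlib

open Equiv

/-- The cycle type of a permutation, including fixed points as parts equal to `1`. -/
def fullCycleType {β : Type*} [Fintype β] [DecidableEq β] (σ : Equiv.Perm β) : Multiset ℕ :=
  σ.cycleType + Multiset.replicate (Finset.univ.filter fun x => σ x = x).card 1

/-- The number of cycles (orbits) of a permutation, fixed points counting as 1-cycles. -/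
def numCycles {β : Type*} [Fintype β] [DecidableEq β] (σ : Equiv.Perm β) : ℕ :=
  Multiset.card (fullCycleType σ)

/-- `σ` is a long cycle (an `n`-cycle) on `Fin n`. -/
def IsLongCycle {n : ℕ} (σ : Equiv.Perm (Fin n)) : Prop :=
  fullCycleType σ = {n}

/-- Signless Stirling numbers of the first kind: the number of permutations of an
`N`-element set with exactly `k` cycles (orbits). -/
noncomputable def stirC (N k : ℕ) : ℕ :=
  Nat.card {π : Equiv.Perm (Fin N) // numCycles π = k}

/-- The position of `x` in the list `s_0 = 0, s_1 = s(s_0), s_2 = s(s_1), ...`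
(when `s` is a long cycle, this is the position of `x` in the cycle list of `s`
starting at the element `0`, i.e. the element playing the role of `1 ∈ [n]`). -/
noncomputable def posIn {n : ℕ} [NeZero n] (s : Equiv.Perm (Fin n)) (x : Fin n) : ℕ :=
  sInf {t : ℕ | (s ^ t) 0 = x}

/-- The number of exceedances of the pair `(s, π)` w.r.t. the order `<_s`. -/
noncomputable def exc {n : ℕ} [NeZero n] (s π : Equiv.Perm (Fin n)) : ℕ :=
  Nat.card {x : Fin n // posIn s x < posIn s (π x)}

/-- The number of non-trivial anti-exceedances of the pair `(s, π)` w.r.t. `<_s`: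
elements `x` with `π x ≤_s x` such that `π x` is not the `<_s`-minimum of the
cycle of `π` containing `x`. -/
noncomputable def numNTAE {n : ℕ} [NeZero n] (s π : Equiv.Perm (Fin n)) : ℕ :=
  Nat.card {x : Fin n // posIn s (π x) ≤ posIn s x ∧
    ∃ y : Fin n, π.SameCycle x y ∧ posIn s y < posIn s (π x)}

/-- `kappa μ lam j` : the number of ways of selecting `j` parts of `μ` (parts regarded as
distinguishable) whose replacement by their sum yields `lam`.  Each sub-multiset `S` of `μ`
occurs in `μ.powerset` with multiplicity `∏_v binomial (m_v μ) (m_v S)`. -/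
def kappa (μ lam : Multiset ℕ) (j : ℕ) : ℕ :=
  Multiset.card ((μ.powerset).filter fun S => Multiset.card S = j ∧ (μ - S) + {S.sum} = lam)

/-- `zCount m lam` : the number of permutations of an `m`-element set of cycle type `lam`. -/
noncomputable def zCount (m : ℕ) (lam : Multiset ℕ) : ℕ :=
  Nat.card {π : Equiv.Perm (Fin m) // fullCycleType π = lam}

/-- the start (0-based) of the `i`-th block of the composition `α`. -/
def blockStart {k : ℕ} (α : Fin k → ℕ) (i : Fin k) : ℕ :=
  ∑ t ∈ Finset.univ.filter (fun t => t < i), α t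

/-- `x` (0-based) lies in the `i`-th block of the composition `α`. -/
def InBlock {k : ℕ} (α : Fin k → ℕ) (i : Fin k) (x : ℕ) : Prop :=
  blockStart α i ≤ x ∧ x < blockStart α i + α i

instance {k : ℕ} (α : Fin k → ℕ) (i : Fin k) (x : ℕ) : Decidable (InBlock α i x) :=
  inferInstanceAs (Decidable (_ ∧ _))

/-- `π` is `α`-separated: every cycle (orbit) of `π` is contained in a single block. -/
def SepPerm {n k : ℕ} (α : Fin k → ℕ) (π : Equiv.Perm (Fin n)) : Prop :=
  ∀ x y : Fin n, π.SameCycle x y → ∀ i : Fin k, (InBlock α i x.val ↔ InBlock α i (y.val))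

/-- `π` is `α`-separated of `α`-type `Λ`: `π` preserves every block, and the restriction
of `π` to the `i`-th block has cycle type `Λ i`. -/
def HasSepType {n k : ℕ} (α : Fin k → ℕ) (Λ : Fin k → Multiset ℕ)
    (π : Equiv.Perm (Fin n)) : Prop :=
  ∃ h : ∀ (i : Fin k) (x : Fin n), InBlock α i x.val ↔ InBlock α i (π x).val,
    ∀ i : Fin k, fullCycleType (π.subtypePerm (p := fun x : Fin n => InBlock α i x.val) (fun x => (h i x).symm)) = Λ i

/-- `π` is `α`-separated and for each `i` the elements of the `i`-th block lie in exactly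
`d i` cycles of `π`. -/
def HasSepCounts {n k : ℕ} (α : Fin k → ℕ) (d : Fin k → ℕ)
    (π : Equiv.Perm (Fin n)) : Prop :=
  ∃ h : ∀ (i : Fin k) (x : Fin n), InBlock α i x.val ↔ InBlock α i (π x).val,
    ∀ i : Fin k, numCycles (π.subtypePerm (p := fun x : Fin n => InBlock α i x.val) (fun x => (h i x).symm)) = d i

/-- `p^{(n)}_α` : the number of ordered pairs of long cycles whose product is `α`-separated. -/
noncomputable def pSep (n : ℕ) {k : ℕ} (α : Fin k → ℕ) : ℕ :=
  Nat.card {uv : Equiv.Perm (Fin n) × Equiv.Perm (Fin n) //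
    IsLongCycle uv.1 ∧ IsLongCycle uv.2 ∧ SepPerm α (uv.1 * uv.2)}

/-- `p^{(n)}_Λ` : the number of ordered pairs of long cycles whose product has `α`-type `Λ`. -/
noncomputable def pSepType (n : ℕ) {k : ℕ} (α : Fin k → ℕ) (Λ : Fin k → Multiset ℕ) : ℕ :=
  Nat.card {uv : Equiv.Perm (Fin n) × Equiv.Perm (Fin n) //
    IsLongCycle uv.1 ∧ IsLongCycle uv.2 ∧ HasSepType α Λ (uv.1 * uv.2)}

/-- `p^{(n)}_{α,d}` : the number of ordered pairs of long cycles whose product is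
`α`-separated with the elements of the `i`-th block lying in exactly `d i` cycles. -/
noncomputable def pSepCount (n : ℕ) {k : ℕ} (α d : Fin k → ℕ) : ℕ :=
  Nat.card {uv : Equiv.Perm (Fin n) × Equiv.Perm (Fin n) //
    IsLongCycle uv.1 ∧ IsLongCycle uv.2 ∧ HasSepCounts α d (uv.1 * uv.2)}

/-- `p^η_λ` : the number of pairs `(s, π)` with `s` a long cycle, `π` of cycle type `λ`
and `s π⁻¹` of cycle type `η`. -/
noncomputable def pEtaLam (n : ℕ) (lam eta : Nat.Partition n) : ℕ :=
  Nat.card {sp : Equiv.Perm (Fin n) × Equiv.Perm (Fin n) //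
    IsLongCycle sp.1 ∧ fullCycleType sp.2 = lam.parts ∧
      fullCycleType (sp.1 * sp.2⁻¹) = eta.parts}

/-- `p^η_{λ,a}` : as `pEtaLam`, refined by the number of exceedances of `(s, π)`. -/
noncomputable def pEtaLamA (n : ℕ) [NeZero n] (lam eta : Nat.Partition n) (a : ℕ) : ℕ :=
  Nat.card {sp : Equiv.Perm (Fin n) × Equiv.Perm (Fin n) //
    IsLongCycle sp.1 ∧ fullCycleType sp.2 = lam.parts ∧
      fullCycleType (sp.1 * sp.2⁻¹) = eta.parts ∧ exc sp.1 sp.2 = a}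

/-- `p^{(n)}_λ` : the number of pairs `(s, π)` with `s` a long cycle, `π` of cycle type
`lam` and `s π⁻¹` a long cycle. -/
noncomputable def pLong (n : ℕ) (lam : Multiset ℕ) : ℕ :=
  Nat.card {sp : Equiv.Perm (Fin n) × Equiv.Perm (Fin n) //
    IsLongCycle sp.1 ∧ fullCycleType sp.2 = lam ∧ IsLongCycle (sp.1 * sp.2⁻¹)}


/-! ### Auxiliary development -/

open Finset

section FullCT

lemma fullCycleType_count_one {β : Type*} [Fintype β] [DecidableEq β] (σ : Equiv.Perm β) :
    (fullCycleType σ).count 1 = (Finset.univ.filter fun x => σ x = x).card := by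
  have h0 : σ.cycleType.count 1 = 0 :=
    Multiset.count_eq_zero.2 fun h => by
      have := Equiv.Perm.two_le_of_mem_cycleType h; omega
  simp [fullCycleType, Multiset.count_replicate, h0]

end FullCT

section LongCycle

variable {n : ℕ} [NeZero n]

lemma isLongCycle_of_two_le (hn : 2 ≤ n) {s : Equiv.Perm (Fin n)} (hs : IsLongCycle s) :
    s.IsCycle ∧ s.support = Finset.univ := by
  have h : s.cycleType + Multiset.replicate (Finset.univ.filter fun x => s x = x).card 1
      = {n} := hs
  have hcard := congrArg Multiset.card h
  simp only [Multiset.card_add, Multiset.card_replicate, Multiset.card_singleton] at hcard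
  rcases Nat.eq_zero_or_pos (Multiset.card s.cycleType) with h0 | h1
  · exfalso
    have hs1 : s = 1 := Equiv.Perm.cycleType_eq_zero.mp (Multiset.card_eq_zero.mp h0)
    subst hs1
    have : (Finset.univ.filter fun x : Fin n => (1 : Equiv.Perm (Fin n)) x = x) = Finset.univ := by
      simp
    rw [this] at hcard
    simp [Finset.card_univ] at hcard
    omega
  · have hf0 : (Finset.univ.filter fun x => s x = x).card = 0 := by omega
    rw [hf0] at h
    simp only [Multiset.replicate_zero, add_zero] at h
    have hc : s.IsCycle := Equiv.Perm.card_cycleType_eq_one.mp (by rw [h]; rfl)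
    refine ⟨hc, ?_⟩
    have hsum : s.cycleType.sum = s.support.card := Equiv.Perm.sum_cycleType s
    rw [h] at hsum
    simp only [Multiset.sum_singleton] at hsum
    exact Finset.eq_univ_of_card _ (by rw [← hsum, Fintype.card_fin])

lemma isLongCycle_iff {s : Equiv.Perm (Fin n)} :
    IsLongCycle s ↔ ∀ x : Fin n, ∃ t : ℕ, (s ^ t) 0 = x := by
  rcases Nat.lt_or_ge n 2 with hn | hn
  · have hn1 : n = 1 := by have := NeZero.pos n; omega
    subst hn1
    constructor
    · intro _ x
      exact ⟨0, Subsingleton.elim _ _⟩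
    · intro _
      have hs1 : s = 1 := Equiv.ext fun x => Subsingleton.elim _ _
      subst hs1
      show fullCycleType (1 : Equiv.Perm (Fin 1)) = {1}
      have : (Finset.univ.filter fun x : Fin 1 => (1 : Equiv.Perm (Fin 1)) x = x)
          = Finset.univ := by simp
      simp [fullCycleType, Equiv.Perm.cycleType_one, this]
  · constructor
    · intro hs x
      obtain ⟨hc, hsupp⟩ := isLongCycle_of_two_le hn hs
      by_cases hx : x = 0
      · exact ⟨0, by simp [hx]⟩
      · have h0 : s 0 ≠ 0 := Equiv.Perm.mem_support.mp (by rw [hsupp]; exact Finset.mem_univ _)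
        have hxx : s x ≠ x := Equiv.Perm.mem_support.mp (by rw [hsupp]; exact Finset.mem_univ _)
        exact hc.exists_pow_eq h0 hxx
    · intro horb
      have h0 : s 0 ≠ 0 := by
        intro h00
        have hall : ∀ t : ℕ, (s ^ t) 0 = 0 := by
          intro t
          induction t with
          | zero => rfl
          | succ t ih => rw [pow_succ]; simp [Equiv.Perm.mul_apply, h00, ih]
        obtain ⟨t, ht⟩ := horb ⟨1, by omega⟩
        rw [hall t] at ht
        have := congrArg Fin.val ht
        simp at this
      have hnofix : ∀ y : Fin n, s y ≠ y := by
        intro y hy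
        obtain ⟨t, rfl⟩ := horb y
        have h1 : s ((s ^ t) 0) = (s ^ t) ((s : Equiv.Perm (Fin n)) 0) := by
          have := congrFun (congrArg (fun p => (p : Equiv.Perm (Fin n)) ∘ _root_.id)
            (pow_succ s t)) 0
          calc s ((s ^ t) 0) = (s ^ (t + 1)) 0 := by rw [pow_succ']; rfl
            _ = (s ^ t) (s 0) := by rw [pow_succ]; rfl
        rw [hy] at h1
        exact h0 ((s ^ t).injective h1.symm)
      have hc : s.IsCycle := by
        refine ⟨0, h0, fun y hy => ?_⟩
        obtain ⟨t, rfl⟩ := horb y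
        exact ⟨(t : ℤ), by rw [zpow_natCast]⟩
      have hsupp : s.support = Finset.univ :=
        Finset.eq_univ_iff_forall.mpr fun x => Equiv.Perm.mem_support.mpr (hnofix x)
      show fullCycleType s = {n}
      have hfix : (Finset.univ.filter fun x : Fin n => s x = x) = ∅ := by
        refine Finset.filter_eq_empty_iff.mpr fun x _ => hnofix x
      rw [fullCycleType, hc.cycleType, hsupp, hfix, Finset.card_univ, Fintype.card_fin]
      simp

lemma IsLongCycle.inv' {s : Equiv.Perm (Fin n)} (hs : IsLongCycle s) : IsLongCycle s⁻¹ := by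
  rcases Nat.lt_or_ge n 2 with hn | hn
  · have hn1 : n = 1 := by have := NeZero.pos n; omega
    subst hn1
    have hs1 : s⁻¹ = s := Equiv.ext fun x => Subsingleton.elim _ _
    rwa [hs1]
  · obtain ⟨hc, hsupp⟩ := isLongCycle_of_two_le hn hs
    have hc' : (s⁻¹).IsCycle := hc.inv
    show fullCycleType s⁻¹ = {n}
    have hfix : (Finset.univ.filter fun x : Fin n => s⁻¹ x = x) = ∅ := by
      refine Finset.filter_eq_empty_iff.mpr fun x _ hx => ?_
      have : s x = x := by
        conv_lhs => rw [← hx]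
        exact s.apply_symm_apply x
      exact Equiv.Perm.mem_support.mp (by rw [hsupp]; exact Finset.mem_univ x) this
    rw [fullCycleType, hc'.cycleType, Equiv.Perm.support_inv, hsupp, hfix,
      Finset.card_univ, Fintype.card_fin]
    simp

lemma IsLongCycle.orderOf_eq {s : Equiv.Perm (Fin n)} (hs : IsLongCycle s) :
    orderOf s = n := by
  rcases Nat.lt_or_ge n 2 with hn | hn
  · have hn1 : n = 1 := by have := NeZero.pos n; omega
    subst hn1
    have hs1 : s = 1 := Equiv.ext fun x => Subsingleton.elim _ _
    rw [hs1, orderOf_one]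
  · obtain ⟨hc, hsupp⟩ := isLongCycle_of_two_le hn hs
    rw [hc.orderOf, hsupp, Finset.card_univ, Fintype.card_fin]

lemma IsLongCycle.pow_n {s : Equiv.Perm (Fin n)} (hs : IsLongCycle s) : s ^ n = 1 := by
  have := pow_orderOf_eq_one s
  rwa [hs.orderOf_eq] at this

lemma longCycle_pow_inj {s : Equiv.Perm (Fin n)} (hs : IsLongCycle s) {a b : ℕ}
    (ha : a < n) (hb : b < n) (h : (s ^ a) 0 = (s ^ b) 0) : a = b := by
  have key : ∀ a b : ℕ, a ≤ b → b < n → (s ^ a) 0 = (s ^ b) 0 → a = b := by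
    intro a b hab hbn habe
    by_contra hne
    have hd : 0 < b - a := by omega
    have hfix : (s ^ (b - a)) ((s ^ a) 0) = (s ^ a) 0 := by
      rw [← Equiv.Perm.mul_apply, ← pow_add]
      have : b - a + a = b := by omega
      rw [this, ← habe]
    rcases Nat.lt_or_ge n 2 with hn | hn
    · omega
    · obtain ⟨hc, hsupp⟩ := isLongCycle_of_two_le hn hs
      have hy : s ((s ^ a) 0) ≠ (s ^ a) 0 :=
        Equiv.Perm.mem_support.mp (by rw [hsupp]; exact Finset.mem_univ _)
      have hone : s ^ (b - a) = 1 := (hc.pow_eq_one_iff' hy).mpr hfix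
      have := orderOf_le_of_pow_eq_one hd hone
      rw [hs.orderOf_eq] at this
      omega
  rcases Nat.le_total a b with hab | hab
  · exact key a b hab hb h
  · exact (key b a hab ha h.symm).symm

lemma posIn_spec {s : Equiv.Perm (Fin n)} (hs : IsLongCycle s) (x : Fin n) :
    (s ^ posIn s x) 0 = x ∧ posIn s x < n := by
  obtain ⟨t, ht⟩ := isLongCycle_iff.mp hs x
  have htm : t % n ∈ {u : ℕ | (s ^ u) 0 = x} := by
    show (s ^ (t % n)) 0 = x
    have hmod := pow_mod_orderOf s t
    rw [hs.orderOf_eq] at hmod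
    rw [hmod]
    exact ht
  have hne : {u : ℕ | (s ^ u) 0 = x}.Nonempty := ⟨t % n, htm⟩
  constructor
  · exact Nat.sInf_mem hne
  · exact lt_of_le_of_lt (Nat.sInf_le htm) (Nat.mod_lt _ (NeZero.pos n))

lemma posIn_lt {s : Equiv.Perm (Fin n)} (hs : IsLongCycle s) (x : Fin n) :
    posIn s x < n := (posIn_spec hs x).2

lemma posIn_pow {s : Equiv.Perm (Fin n)} (hs : IsLongCycle s) (x : Fin n) :
    (s ^ posIn s x) 0 = x := (posIn_spec hs x).1

lemma posIn_zero (s : Equiv.Perm (Fin n)) : posIn s 0 = 0 :=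
  Nat.le_zero.mp (Nat.sInf_le (by show (s ^ 0) 0 = 0; rfl))

lemma posIn_inj {s : Equiv.Perm (Fin n)} (hs : IsLongCycle s) {x y : Fin n}
    (h : posIn s x = posIn s y) : x = y := by
  rw [← posIn_pow hs x, ← posIn_pow hs y, h]

lemma posIn_eq_zero_iff {s : Equiv.Perm (Fin n)} (hs : IsLongCycle s) {x : Fin n} :
    posIn s x = 0 ↔ x = 0 := by
  constructor
  · intro h
    exact posIn_inj hs (by rw [h, posIn_zero])
  · intro h; rw [h, posIn_zero]

lemma posIn_inv {s : Equiv.Perm (Fin n)} (hs : IsLongCycle s) {x : Fin n} (hx : x ≠ 0) :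
    posIn s⁻¹ x = n - posIn s x := by
  set t := posIn s x with htdef
  have ht : (s ^ t) 0 = x := posIn_pow hs x
  have htn : t < n := posIn_lt hs x
  have ht0 : t ≠ 0 := fun h => hx (by rw [← ht, h, pow_zero]; rfl)
  have hmem : (s⁻¹ ^ (n - t)) 0 = x := by
    rw [inv_pow]
    rw [Equiv.Perm.inv_eq_iff_eq]
    rw [← ht, ← Equiv.Perm.mul_apply, ← pow_add]
    have : n - t + t = n := by omega
    rw [this, hs.pow_n]
    rfl
  have hmin : ∀ u, u < n - t → (s⁻¹ ^ u) 0 ≠ x := by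
    intro u hu hux
    have : (s ^ u) x = 0 := by
      rw [inv_pow] at hux
      rw [← hux]
      exact (s ^ u).apply_symm_apply 0
    rw [← ht, ← Equiv.Perm.mul_apply, ← pow_add] at this
    have h0 : (s ^ (u + t)) 0 = (s ^ 0) 0 := by rw [this, pow_zero]; rfl
    have := longCycle_pow_inj hs (by omega) (by omega) h0
    omega
  have h1 : posIn s⁻¹ x ≤ n - t := Nat.sInf_le hmem
  have h2 : ¬ posIn s⁻¹ x < n - t := by
    intro hlt
    have hmem' : posIn s⁻¹ x ∈ {u : ℕ | (s⁻¹ ^ u) 0 = x} := Nat.sInf_mem ⟨n - t, hmem⟩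
    exact hmin _ hlt hmem'
  omega

end LongCycle
section CountLong

lemma conj_pow_eq {G : Type*} [Group G] (a b : G) (t : ℕ) :
    (a * b * a⁻¹) ^ t = a * b ^ t * a⁻¹ := by
  induction t with
  | zero => simp
  | succ t ih => rw [pow_succ, pow_succ, ih]; group

variable {n : ℕ} [NeZero n]

open Fin.NatCast in
lemma rot_pow_apply (t : ℕ) (x : Fin n) :
    ((Equiv.addLeft (1 : Fin n)) ^ t) x = (t : Fin n) + x := by
  induction t with
  | zero => simp
  | succ t ih =>
    rw [pow_succ']
    show (Equiv.addLeft (1 : Fin n)) (((Equiv.addLeft (1 : Fin n)) ^ t) x) = _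
    rw [ih]
    show (1 : Fin n) + ((t : Fin n) + x) = ((t + 1 : ℕ) : Fin n) + x
    push_cast
    abel

open Fin.NatCast in
/-- The bijection between long cycles and permutations fixing `0`. -/
noncomputable def longCycleEquiv :
    {s : Equiv.Perm (Fin n) // IsLongCycle s} ≃ {f : Equiv.Perm (Fin n) // f 0 = 0} where
  toFun s := by
    refine ⟨Equiv.ofBijective (fun t : Fin n => (s.1 ^ (t : ℕ)) 0) ?_, ?_⟩
    · rw [← Finite.injective_iff_bijective]
      intro a b h
      exact Fin.ext (longCycle_pow_inj s.2 a.isLt b.isLt h)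
    · show (s.1 ^ ((0 : Fin n) : ℕ)) 0 = 0
      simp
  invFun f := by
    refine ⟨f.1 * (Equiv.addLeft (1 : Fin n)) * f.1⁻¹, ?_⟩
    rw [isLongCycle_iff]
    intro x
    refine ⟨(f.1.symm x : ℕ), ?_⟩
    rw [conj_pow_eq]
    have h0 : f.1⁻¹ 0 = 0 := by
      rw [Equiv.Perm.inv_eq_iff_eq]; exact f.2.symm
    rw [Equiv.Perm.mul_apply, Equiv.Perm.mul_apply, h0, rot_pow_apply, add_zero,
      Fin.cast_val_eq_self]
    exact f.1.apply_symm_apply x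
  left_inv := by
    rintro ⟨s, hs⟩
    apply Subtype.ext
    apply Equiv.ext
    intro x
    have hbij : Function.Bijective (fun t : Fin n => (s ^ (t : ℕ)) 0) := by
      rw [← Finite.injective_iff_bijective]
      intro a b h
      exact Fin.ext (longCycle_pow_inj hs a.isLt b.isLt h)
    set f := Equiv.ofBijective (fun t : Fin n => (s ^ (t : ℕ)) 0) hbij with hf
    show (f * (Equiv.addLeft (1 : Fin n)) * f⁻¹) x = s x
    have hfs : ∀ t : Fin n, f t = (s ^ (t : ℕ)) 0 := fun t => rfl
    set t := f.symm x with htdef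
    have hx : f t = x := f.apply_symm_apply x
    rw [Equiv.Perm.mul_apply, Equiv.Perm.mul_apply]
    show f ((1 : Fin n) + f⁻¹ x) = s x
    have : (f⁻¹ : Equiv.Perm (Fin n)) x = t := rfl
    rw [this, hfs]
    have hval : Fin.val ((1 : Fin n) + t) = (1 + (t : ℕ)) % n := by
      rw [Fin.val_add, Fin.val_one', Nat.mod_add_mod]
    rw [hval]
    have hmod := pow_mod_orderOf s (1 + (t : ℕ))
    rw [hs.orderOf_eq] at hmod
    rw [hmod, pow_add, pow_one, Equiv.Perm.mul_apply]
    rw [← hfs t, hx]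
  right_inv := by
    rintro ⟨f, hf⟩
    apply Subtype.ext
    apply Equiv.ext
    intro t
    show ((f * (Equiv.addLeft (1 : Fin n)) * f⁻¹) ^ (t : ℕ)) 0 = f t
    rw [conj_pow_eq]
    have h0 : f⁻¹ 0 = 0 := by rw [Equiv.Perm.inv_eq_iff_eq]; exact hf.symm
    rw [Equiv.Perm.mul_apply, Equiv.Perm.mul_apply, h0, rot_pow_apply, add_zero,
      Fin.cast_val_eq_self]

lemma card_longCycles :
    Nat.card {s : Equiv.Perm (Fin n) // IsLongCycle s} = (n - 1).factorial := by
  rw [Nat.card_congr (longCycleEquiv (n := n))]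
  have e2 : {f : Equiv.Perm (Fin n) // ∀ a : Fin n, ¬ a ≠ 0 → f a = a}
      ≃ {f : Equiv.Perm (Fin n) // f 0 = 0} := by
    refine Equiv.subtypeEquivRight fun f => ?_
    constructor
    · intro h; exact h 0 (not_not.mpr rfl)
    · intro h a ha
      rw [not_not.mp ha, h]
  have e1 := (Equiv.Perm.subtypeEquivSubtypePerm (fun x : Fin n => x ≠ 0)).trans e2
  rw [← Nat.card_congr e1, Nat.card_eq_fintype_card, Fintype.card_perm]
  congr 1
  have : Fintype.card {x : Fin n // x ≠ 0} = n - 1 := by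
    rw [Fintype.card_subtype_compl, Fintype.card_fin, Fintype.card_subtype_eq]
  rw [this]

end CountLong

section Exc

variable {n : ℕ} [NeZero n]

lemma exc_eq_sum (s π : Equiv.Perm (Fin n)) :
    exc s π = ∑ x : Fin n, (if posIn s x < posIn s (π x) then 1 else 0) := by
  rw [exc, Nat.card_eq_fintype_card, Fintype.card_subtype, Finset.card_filter]

lemma exc_add_exc_inv {s : Equiv.Perm (Fin n)} (hs : IsLongCycle s)
    (π : Equiv.Perm (Fin n)) :
    exc s π + exc s⁻¹ π = n - (Finset.univ.filter fun x => π x = x).card := by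
  have key : ∀ x : Fin n,
      (if posIn s x < posIn s (π x) then 1 else 0)
        + (if posIn s⁻¹ x < posIn s⁻¹ (π x) then 1 else 0)
        + (if π x = 0 ∧ π x ≠ x then 1 else 0)
      = (if π x ≠ x then 1 else 0) + (if x = 0 ∧ π x ≠ x then 1 else 0) := by
    intro x
    by_cases hfx : π x = x
    · simp [hfx]
    · by_cases hx0 : x = 0
      · subst hx0
        have hπ0 : π 0 ≠ 0 := hfx
        have h3 : posIn s (π 0) ≠ 0 := fun h => hπ0 ((posIn_eq_zero_iff hs).mp h)
        have h4 : posIn s⁻¹ (π 0) ≠ 0 := fun h => hπ0 ((posIn_eq_zero_iff hs.inv').mp h)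
        simp [hfx, hπ0, posIn_zero, Nat.pos_of_ne_zero h3, Nat.pos_of_ne_zero h4]
      · by_cases hπx0 : π x = 0
        · have h1 : posIn s (π x) = 0 := by rw [hπx0, posIn_zero]
          have h2 : posIn s⁻¹ (π x) = 0 := by rw [hπx0, posIn_zero]
          simp [hfx, hx0, hπx0, h1, h2, posIn_zero]
        · have ha : posIn s x < n := posIn_lt hs x
          have hb : posIn s (π x) < n := posIn_lt hs (π x)
          have hax : posIn s x ≠ 0 := fun h => hx0 ((posIn_eq_zero_iff hs).mp h)
          have hbx : posIn s (π x) ≠ 0 := fun h => hπx0 ((posIn_eq_zero_iff hs).mp h)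
          have hne : posIn s x ≠ posIn s (π x) := fun h => hfx (posIn_inj hs h.symm)
          have hinva : posIn s⁻¹ x = n - posIn s x := posIn_inv hs hx0
          have hinvb : posIn s⁻¹ (π x) = n - posIn s (π x) := posIn_inv hs hπx0
          simp only [hinva, hinvb, hfx, hx0, hπx0, ne_eq, not_false_eq_true, if_true,
            false_and, if_false, and_true, and_false]
          split_ifs <;> omega
  have hsumkey := Finset.sum_congr rfl (fun x (_ : x ∈ Finset.univ) => key x)
  rw [Finset.sum_add_distrib, Finset.sum_add_distrib, Finset.sum_add_distrib] at hsumkey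
  -- identify the pieces
  rw [← exc_eq_sum s π, ← exc_eq_sum s⁻¹ π] at hsumkey
  have hc : ∑ x : Fin n, (if π x = 0 ∧ π x ≠ x then 1 else 0)
      = ∑ x : Fin n, (if x = 0 ∧ π x ≠ x then 1 else 0) := by
    have hc1 : ∀ x : Fin n, (if π x = 0 ∧ π x ≠ x then (1:ℕ) else 0)
        = if x = π⁻¹ 0 ∧ π x ≠ x then 1 else 0 := by
      intro x
      congr 1
      simp [Equiv.Perm.eq_inv_iff_eq, Equiv.eq_symm_apply]
    rw [Finset.sum_congr rfl fun x _ => hc1 x]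
    have h2 : ∀ v : Fin n, ∑ x : Fin n, (if x = v ∧ π x ≠ x then (1:ℕ) else 0)
        = if π v ≠ v then 1 else 0 := by
      intro v
      rw [Finset.sum_congr rfl fun x _ => by rw [ite_and]]
      rw [Finset.sum_ite_eq' Finset.univ v (fun x => if π x ≠ x then (1:ℕ) else 0)]
      simp
    rw [h2, h2]
    by_cases hp : π 0 = 0
    · have hq : π⁻¹ 0 = 0 := by rw [Equiv.Perm.inv_eq_iff_eq, hp]
      simp [hp, hq]
    · have hq : π⁻¹ 0 ≠ 0 := fun h => hp (by nth_rewrite 1 [← h]; exact π.apply_symm_apply 0)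
      simp [hp, hq, Ne.symm hq, Equiv.eq_symm_apply]
  have hd : ∑ x : Fin n, (if π x ≠ x then (1:ℕ) else 0)
      = n - (Finset.univ.filter fun x => π x = x).card := by
    rw [← Finset.card_filter]
    have := Finset.card_filter_add_card_filter_not
      (s := (Finset.univ : Finset (Fin n))) (p := fun x => π x = x)
    simp only [Finset.card_univ, Fintype.card_fin] at this
    have h2 : (Finset.univ.filter fun x : Fin n => ¬ π x = x)
        = (Finset.univ.filter fun x : Fin n => π x ≠ x) := rfl
    rw [h2] at this
    omega
  rw [hc] at hsumkey
  have hcanc := Nat.add_right_cancel hsumkey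
  rw [hcanc, hd]

open scoped Classical in
lemma two_mul_sum_exc (π : Equiv.Perm (Fin n)) :
    2 * (∑ s : Equiv.Perm (Fin n), if IsLongCycle s then exc s π else 0)
      = (n - 1).factorial * (n - (Finset.univ.filter fun x => π x = x).card) := by
  have hinv : (∑ s : Equiv.Perm (Fin n), if IsLongCycle s then exc s π else 0)
      = ∑ s : Equiv.Perm (Fin n), if IsLongCycle s then exc s⁻¹ π else 0 := by
    rw [← Equiv.sum_comp (Equiv.inv (Equiv.Perm (Fin n)))
      (fun s => if IsLongCycle s then exc s π else 0)]
    refine Finset.sum_congr rfl fun s _ => ?_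
    show (if IsLongCycle s⁻¹ then exc s⁻¹ π else 0) = _
    refine if_congr ⟨fun h => by have := h.inv'; rwa [inv_inv] at this, fun h => h.inv'⟩ rfl rfl
  have h2 : 2 * (∑ s : Equiv.Perm (Fin n), if IsLongCycle s then exc s π else 0)
      = ∑ s : Equiv.Perm (Fin n),
          if IsLongCycle s then exc s π + exc s⁻¹ π else 0 := by
    rw [two_mul]
    nth_rewrite 2 [hinv]
    rw [← Finset.sum_add_distrib]
    refine Finset.sum_congr rfl fun s _ => ?_
    by_cases h : IsLongCycle s <;> simp [h]
  rw [h2]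
  have h3 : ∀ s : Equiv.Perm (Fin n),
      (if IsLongCycle s then exc s π + exc s⁻¹ π else 0)
      = if IsLongCycle s then n - (Finset.univ.filter fun x => π x = x).card else 0 := by
    intro s
    by_cases h : IsLongCycle s
    · rw [if_pos h, if_pos h, exc_add_exc_inv h]
    · rw [if_neg h, if_neg h]
  rw [Finset.sum_congr rfl fun s _ => h3 s]
  rw [← Finset.sum_filter, Finset.sum_const, smul_eq_mul]
  congr 1
  rw [← Fintype.card_subtype, ← Nat.card_eq_fintype_card, card_longCycles]

end Exc
section Blocks

variable {n k : ℕ} [NeZero n] {α : Fin k → ℕ}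

lemma inBlock_def {i : Fin k} {x : ℕ} :
    InBlock α i x ↔ blockStart α i ≤ x ∧ x < blockStart α i + α i := Iff.rfl

lemma blockStart_add_le_of_lt (α : Fin k → ℕ) {i j : Fin k} (hij : i < j) :
    blockStart α i + α i ≤ blockStart α j := by
  have hsub : insert i (Finset.univ.filter fun t => t < i)
      ⊆ Finset.univ.filter fun t => t < j := by
    intro t ht
    rcases Finset.mem_insert.mp ht with rfl | ht
    · exact Finset.mem_filter.mpr ⟨Finset.mem_univ _, hij⟩
    · exact Finset.mem_filter.mpr ⟨Finset.mem_univ _, lt_trans (Finset.mem_filter.mp ht).2 hij⟩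
  have hins : ∑ t ∈ insert i (Finset.univ.filter fun t => t < i), α t
      = α i + blockStart α i := by
    rw [Finset.sum_insert (by simp)]
    rfl
  calc blockStart α i + α i
      = ∑ t ∈ insert i (Finset.univ.filter fun t => t < i), α t := by rw [hins, add_comm]
    _ ≤ ∑ t ∈ Finset.univ.filter (fun t => t < j), α t :=
        Finset.sum_le_sum_of_subset hsub

lemma blockStart_add_le (hsum : ∑ i, α i = n) (i : Fin k) :
    blockStart α i + α i ≤ n := by
  have hins : ∑ t ∈ insert i (Finset.univ.filter fun t => t < i), α t
      = α i + blockStart α i := by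
    rw [Finset.sum_insert (by simp)]
    rfl
  calc blockStart α i + α i
      = ∑ t ∈ insert i (Finset.univ.filter fun t => t < i), α t := by rw [hins, add_comm]
    _ ≤ ∑ t, α t := Finset.sum_le_sum_of_subset (Finset.subset_univ _)
    _ = n := hsum

lemma block_unique {i j : Fin k} {x : ℕ} (hi : InBlock α i x) (hj : InBlock α j x) :
    i = j := by
  by_contra hne
  rw [inBlock_def] at hi hj
  rcases lt_or_gt_of_ne hne with h | h
  · have := blockStart_add_le_of_lt α h
    omega
  · have := blockStart_add_le_of_lt α h
    omega

lemma exists_inBlock (hsum : ∑ i, α i = n) (x : Fin n) : ∃ i, InBlock α i x.val := by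
  have hk : 0 < k := by
    by_contra hk
    have hk0 : k = 0 := by omega
    subst hk0
    simp at hsum
    exact (NeZero.ne n) hsum.symm
  have h0 : blockStart α ⟨0, hk⟩ = 0 := by
    unfold blockStart
    apply Finset.sum_eq_zero
    intro t ht
    exact absurd (Finset.mem_filter.mp ht).2 (by simp [Fin.lt_def])
  set T := Finset.univ.filter (fun i : Fin k => blockStart α i ≤ x.val) with hT
  have hTne : T.Nonempty := ⟨⟨0, hk⟩, by simp [hT, h0]⟩
  set i := T.max' hTne with hi
  have hile : blockStart α i ≤ x.val := (Finset.mem_filter.mp (T.max'_mem hTne)).2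
  refine ⟨i, hile, ?_⟩
  by_contra hlt
  push_neg at hlt
  by_cases hlast : i.val + 1 < k
  · set j : Fin k := ⟨i.val + 1, hlast⟩ with hj
    have hij : i < j := by simp [hj, Fin.lt_def]
    have hsubj : (Finset.univ.filter fun t => t < j)
        ⊆ insert i (Finset.univ.filter fun t => t < i) := by
      intro t ht
      have htj : t < j := (Finset.mem_filter.mp ht).2
      rcases Nat.lt_succ_iff_lt_or_eq.mp (show (t : ℕ) < (i : ℕ) + 1 from htj) with h | h
      · exact Finset.mem_insert_of_mem (Finset.mem_filter.mpr ⟨Finset.mem_univ _, h⟩)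
      · have ht : t = i := Fin.ext h
        rw [ht]
        exact Finset.mem_insert_self i _
    have hbs : blockStart α j ≤ blockStart α i + α i := by
      have hins : ∑ t ∈ insert i (Finset.univ.filter fun t => t < i), α t
          = α i + blockStart α i := by
        rw [Finset.sum_insert (by simp)]
        rfl
      calc blockStart α j ≤ ∑ t ∈ insert i (Finset.univ.filter fun t => t < i), α t :=
            Finset.sum_le_sum_of_subset hsubj
        _ = blockStart α i + α i := by rw [hins, add_comm]
    have hjT : j ∈ T := Finset.mem_filter.mpr ⟨Finset.mem_univ _, le_trans hbs hlt⟩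
    have := T.le_max' j hjT
    exact absurd (lt_of_lt_of_le hij this) (lt_irrefl i)
  · have huniv : (Finset.univ : Finset (Fin k))
        = insert i (Finset.univ.filter fun t => t < i) := by
      ext t
      simp only [Finset.mem_univ, true_iff, Finset.mem_insert, Finset.mem_filter, true_and]
      have htk := t.isLt
      have hik := i.isLt
      rcases Nat.lt_or_ge t.val i.val with h | h
      · exact Or.inr (by rwa [Fin.lt_def])
      · exact Or.inl (Fin.ext (by omega))
    have hn : n = α i + blockStart α i := by
      rw [← hsum, huniv, Finset.sum_insert (by simp)]
      rfl
    have hxn := x.isLt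
    omega

noncomputable def blockIdx (hsum : ∑ i, α i = n) (x : Fin n) : Fin k :=
  (exists_inBlock hsum x).choose

lemma blockIdx_spec (hsum : ∑ i, α i = n) (x : Fin n) :
    InBlock α (blockIdx hsum x) x.val :=
  (exists_inBlock hsum x).choose_spec

lemma blockIdx_eq (hsum : ∑ i, α i = n) {i : Fin k} {x : Fin n}
    (h : InBlock α i x.val) : blockIdx hsum x = i :=
  block_unique (blockIdx_spec hsum x) h

/-- The `i`-th block is in bijection with `Fin (α i)`. -/
def blockEquiv (hsum : ∑ i, α i = n) (i : Fin k) :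
    {x : Fin n // InBlock α i x.val} ≃ Fin (α i) where
  toFun x := ⟨x.1.val - blockStart α i, by
    have hx := inBlock_def.mp x.2
    omega⟩
  invFun y := ⟨⟨blockStart α i + y.val, by
      have h1 := blockStart_add_le hsum i
      have h2 := y.isLt
      omega⟩, by
    rw [inBlock_def]
    have h2 := y.isLt
    constructor
    · exact Nat.le_add_right _ _
    · simp only []
      omega⟩
  left_inv x := by
    apply Subtype.ext
    apply Fin.ext
    have hx := inBlock_def.mp x.2
    simp only []
    omega
  right_inv y := by
    apply Fin.ext
    simp only []
    omega

lemma fullCycleType_permCongr {β γ : Type*} [Fintype β] [DecidableEq β] [Fintype γ]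
    [DecidableEq γ] (e : β ≃ γ) (σ : Equiv.Perm β) :
    fullCycleType (e.permCongr σ) = fullCycleType σ := by
  have hct : (e.permCongr σ).cycleType = σ.cycleType := by
    have hp : ∀ x : γ, (fun _ : γ => True) x := fun _ => trivial
    have hext : σ.extendDomain (e.trans (Equiv.subtypeUnivEquiv hp).symm) = e.permCongr σ := by
      apply Equiv.ext
      intro x
      rw [Equiv.Perm.extendDomain_apply_subtype σ _ (hp x)]
      simp [Equiv.subtypeUnivEquiv]
    rw [← hext, Equiv.Perm.cycleType_extendDomain]
  have hfix : (Finset.univ.filter fun x : γ => e.permCongr σ x = x).card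
      = (Finset.univ.filter fun x : β => σ x = x).card := by
    rw [← Fintype.card_subtype, ← Fintype.card_subtype]
    apply Fintype.card_congr
    exact (e.subtypeEquiv fun b => by simp).symm
  rw [fullCycleType, fullCycleType, hct, hfix]

variable (α) in
/-- `π` preserves every block of `α`. -/
def BlockPres (π : Equiv.Perm (Fin n)) : Prop :=
  ∀ (i : Fin k) (x : Fin n), InBlock α i x.val ↔ InBlock α i (π x).val

section Assemble

variable (hsum : ∑ i, α i = n) (g : ∀ i, Equiv.Perm (Fin (α i)))

/-- building block permutations -/
noncomputable def blockG (i : Fin k) : Equiv.Perm {x : Fin n // InBlock α i x.val} :=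
  (blockEquiv hsum i).symm.permCongr (g i)

lemma assemble_key (z : Fin n) (i : Fin k) (hz : InBlock α i z.val) :
    (blockG hsum g (blockIdx hsum z) ⟨z, blockIdx_spec hsum z⟩).val
      = (blockG hsum g i ⟨z, hz⟩).val := by
  have hzi : blockIdx hsum z = i := blockIdx_eq hsum hz
  subst hzi
  rfl

lemma assemble_inj : Function.Injective
    (fun x : Fin n => (blockG hsum g (blockIdx hsum x) ⟨x, blockIdx_spec hsum x⟩).val) := by
  intro x y h
  simp only [] at h
  have hix : InBlock α (blockIdx hsum x) x.val := blockIdx_spec hsum x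
  have hyb : InBlock α (blockIdx hsum x) y.val := by
    have hbx := (blockG hsum g (blockIdx hsum x) ⟨x, blockIdx_spec hsum x⟩).2
    have hby := (blockG hsum g (blockIdx hsum y) ⟨y, blockIdx_spec hsum y⟩).2
    rw [h] at hbx
    have hij : blockIdx hsum x = blockIdx hsum y := block_unique hbx hby
    rw [hij]
    exact blockIdx_spec hsum y
  rw [assemble_key hsum g x _ hix, assemble_key hsum g y _ hyb] at h
  have h2 := (blockG hsum g (blockIdx hsum x)).injective (Subtype.ext h)
  exact Subtype.ext_iff.mp h2

/-- Assemble a family of block permutations into a permutation of `Fin n`. -/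
noncomputable def assemble : Equiv.Perm (Fin n) :=
  Equiv.ofBijective _ ((Finite.injective_iff_bijective).mp (assemble_inj hsum g))

lemma assemble_apply {i : Fin k} {x : Fin n} (hx : InBlock α i x.val) :
    assemble hsum g x = (blockG hsum g i ⟨x, hx⟩).val := by
  have h : blockIdx hsum x = i := blockIdx_eq hsum hx
  subst h
  rfl

lemma assemble_blockPres : BlockPres α (assemble hsum g) := by
  intro i x
  constructor
  · intro hx
    rw [assemble_apply hsum g hx]
    exact (blockG hsum g i ⟨x, hx⟩).2
  · intro hpx
    have hx' := blockIdx_spec hsum x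
    have hpx' : InBlock α (blockIdx hsum x) ((assemble hsum g) x).val := by
      rw [assemble_apply hsum g hx']
      exact (blockG hsum g _ ⟨x, hx'⟩).2
    have : i = blockIdx hsum x := block_unique hpx hpx'
    rwa [this]

end Assemble

/-- Block-preserving permutations are the same as families of block permutations. -/
noncomputable def sepEquiv (hsum : ∑ i, α i = n) :
    {π : Equiv.Perm (Fin n) // BlockPres α π} ≃ (∀ i, Equiv.Perm (Fin (α i))) where
  toFun π := fun i => (blockEquiv hsum i).permCongr (π.1.subtypePerm (p := fun x : Fin n => InBlock α i x.val) (fun x => (π.2 i x).symm))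
  invFun g := ⟨assemble hsum g, assemble_blockPres hsum g⟩
  left_inv := by
    rintro ⟨π, hπ⟩
    apply Subtype.ext
    apply Equiv.ext
    intro x
    have hx := blockIdx_spec hsum x
    show assemble hsum (fun i => (blockEquiv hsum i).permCongr (π.subtypePerm (p := fun x : Fin n => InBlock α i x.val) (fun x => (hπ i x).symm))) x = π x
    rw [assemble_apply hsum _ hx]
    simp [blockG, Equiv.permCongr_apply, Equiv.Perm.subtypePerm_apply]
  right_inv := by
    intro g
    funext i
    apply Equiv.ext
    intro y
    show (blockEquiv hsum i).permCongr
        ((assemble hsum g).subtypePerm (p := fun x : Fin n => InBlock α i x.val) (fun x => (assemble_blockPres hsum g i x).symm)) y = g i y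
    rw [Equiv.permCongr_apply]
    have h1 : ((assemble hsum g).subtypePerm (p := fun x : Fin n => InBlock α i x.val) (fun x => (assemble_blockPres hsum g i x).symm))
        ((blockEquiv hsum i).symm y) = (blockEquiv hsum i).symm (g i y) := by
      apply Subtype.ext
      rw [Equiv.Perm.subtypePerm_apply]
      show assemble hsum g (((blockEquiv hsum i).symm y) : Fin n) = _
      rw [assemble_apply hsum g ((blockEquiv hsum i).symm y).2]
      simp [blockG, Equiv.permCongr_apply]
    rw [h1]
    simp

open scoped Classical in
lemma card_sepType (hsum : ∑ i, α i = n) (Λ : Fin k → Multiset ℕ) :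
    Nat.card {π : Equiv.Perm (Fin n) // HasSepType α Λ π}
      = ∏ i, zCount (α i) (Λ i) := by
  have e0 : {π : Equiv.Perm (Fin n) // HasSepType α Λ π}
      ≃ {π : Equiv.Perm (Fin n) // ∃ h : BlockPres α π,
          ∀ i, fullCycleType (π.subtypePerm (p := fun x : Fin n => InBlock α i x.val) (fun x => (h i x).symm)) = Λ i} :=
    Equiv.subtypeEquivRight fun π => Iff.rfl
  have e1 : {π : Equiv.Perm (Fin n) // HasSepType α Λ π}
      ≃ {pp : {π : Equiv.Perm (Fin n) // BlockPres α π} //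
          ∀ i, fullCycleType (pp.1.subtypePerm (p := fun x : Fin n => InBlock α i x.val) (fun x => (pp.2 i x).symm)) = Λ i} :=
    e0.trans (Equiv.subtypeSubtypeEquivSubtypeExists
      (fun π : Equiv.Perm (Fin n) => BlockPres α π)
      (fun pp => ∀ i, fullCycleType (pp.1.subtypePerm (p := fun x : Fin n => InBlock α i x.val) (fun x => (pp.2 i x).symm)) = Λ i)).symm
  have e2 : {pp : {π : Equiv.Perm (Fin n) // BlockPres α π} //
          ∀ i, fullCycleType (pp.1.subtypePerm (p := fun x : Fin n => InBlock α i x.val) (fun x => (pp.2 i x).symm)) = Λ i}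
      ≃ {g : ∀ i, Equiv.Perm (Fin (α i)) // ∀ i, fullCycleType (g i) = Λ i} := by
    refine (sepEquiv hsum).subtypeEquiv fun pp => ?_
    have hct : ∀ i, fullCycleType ((sepEquiv hsum) pp i)
        = fullCycleType (pp.1.subtypePerm (p := fun x : Fin n => InBlock α i x.val) (fun x => (pp.2 i x).symm)) :=
      fun i => fullCycleType_permCongr _ _
    exact forall_congr' fun i => by rw [hct i]
  have e3 : {g : ∀ i, Equiv.Perm (Fin (α i)) // ∀ i, fullCycleType (g i) = Λ i}
      ≃ ∀ i, {σ : Equiv.Perm (Fin (α i)) // fullCycleType σ = Λ i} :=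
    Equiv.subtypePiEquivPi (p := fun i (σ : Equiv.Perm (Fin (α i))) => fullCycleType σ = Λ i)
  rw [Nat.card_congr ((e1.trans e2).trans e3), Nat.card_pi]
  exact Finset.prod_congr rfl fun i _ => rfl

open scoped Classical in
lemma fix_card_of_sepType (hsum : ∑ i, α i = n) {Λ : Fin k → Multiset ℕ}
    {π : Equiv.Perm (Fin n)} (hπ : HasSepType α Λ π) :
    (Finset.univ.filter fun x => π x = x).card = ∑ i, (Λ i).count 1 := by
  obtain ⟨h, hty⟩ := hπ
  have hι : ∀ i : Fin k, (Λ i).count 1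
      = (Finset.univ.filter fun x : Fin n => InBlock α i x.val ∧ π x = x).card := by
    intro i
    rw [← hty i, fullCycleType_count_one]
    rw [← Fintype.card_subtype, ← Fintype.card_subtype]
    apply Fintype.card_congr
    refine (Equiv.subtypeEquivRight ?_).trans (Equiv.subtypeSubtypeEquivSubtypeInter _ _)
    intro y
    rw [Subtype.ext_iff, Equiv.Perm.subtypePerm_apply]
  have hsplit : ∀ x : Fin n, (if π x = x then (1:ℕ) else 0)
      = ∑ i, if InBlock α i x.val ∧ π x = x then 1 else 0 := by
    intro x
    by_cases hx : π x = x
    · simp only [hx, and_true, if_true]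
      rw [← Finset.card_filter]
      have huniq : (Finset.univ.filter fun i : Fin k => InBlock α i x.val)
          = {blockIdx hsum x} := by
        ext j
        simp only [Finset.mem_filter, Finset.mem_univ, true_and, Finset.mem_singleton]
        constructor
        · intro hj
          exact (blockIdx_eq hsum hj).symm
        · intro hj
          rw [hj]
          exact blockIdx_spec hsum x
      rw [huniq, Finset.card_singleton]
    · simp [hx]
  calc (Finset.univ.filter fun x => π x = x).card
      = ∑ x : Fin n, (if π x = x then (1:ℕ) else 0) := Finset.card_filter _ _
    _ = ∑ x : Fin n, ∑ i, (if InBlock α i x.val ∧ π x = x then (1:ℕ) else 0) :=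
        Finset.sum_congr rfl fun x _ => hsplit x
    _ = ∑ i, ∑ x : Fin n, (if InBlock α i x.val ∧ π x = x then (1:ℕ) else 0) :=
        Finset.sum_comm
    _ = ∑ i, (Λ i).count 1 := by
        refine Finset.sum_congr rfl fun i _ => ?_
        rw [hι i, Finset.card_filter]

end Blocks
open scoped Classical in
/-- `2 Σ exc(s,π) = (n - m_1(Λ)) (n-1)! z_Λ`, the sum over pairs `(s,π)` with
`s` a long cycle and `π` of `α`-type `Λ`. -/
theorem stmt13 (n k : ℕ) [NeZero n] (α : Fin k → ℕ) (hpos : ∀ i, 0 < α i)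
    (hsum : ∑ i, α i = n) (Λ : Fin k → Multiset ℕ)
    (hΛpos : ∀ i, ∀ x ∈ Λ i, 0 < x) (hΛsum : ∀ i, (Λ i).sum = α i) :
    2 * ∑ s : Equiv.Perm (Fin n), ∑ π : Equiv.Perm (Fin n),
        (if IsLongCycle s ∧ HasSepType α Λ π then exc s π else 0)
      = (n - ∑ i, (Λ i).count 1) * (n - 1).factorial * ∏ i, zCount (α i) (Λ i) := by
  rw [Finset.sum_comm, Finset.mul_sum]
  have hpt : ∀ π : Equiv.Perm (Fin n),
      2 * (∑ s : Equiv.Perm (Fin n), if IsLongCycle s ∧ HasSepType α Λ π then exc s π else 0)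
        = if HasSepType α Λ π
            then (n - 1).factorial * (n - ∑ i, (Λ i).count 1) else 0 := by
    intro π
    by_cases hπ : HasSepType α Λ π
    · rw [if_pos hπ]
      have hrw : ∀ s : Equiv.Perm (Fin n),
          (if IsLongCycle s ∧ HasSepType α Λ π then exc s π else 0)
            = if IsLongCycle s then exc s π else 0 := fun s => by simp [hπ]
      rw [Finset.sum_congr rfl fun s _ => hrw s, two_mul_sum_exc π,
        fix_card_of_sepType hsum hπ]
    · rw [if_neg hπ]
      have hrw : ∀ s : Equiv.Perm (Fin n),
          (if IsLongCycle s ∧ HasSepType α Λ π then exc s π else 0) = 0 := fun s => by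
        simp [hπ]
      rw [Finset.sum_congr rfl fun s _ => hrw s]
      simp
  rw [Finset.sum_congr rfl fun π _ => hpt π]
  rw [← Finset.sum_filter, Finset.sum_const, smul_eq_mul]
  have hcard : (Finset.univ.filter fun π : Equiv.Perm (Fin n) => HasSepType α Λ π).card
      = ∏ i, zCount (α i) (Λ i) := by
    rw [← Fintype.card_subtype, ← Nat.card_eq_fintype_card, card_sepType hsum Λ]
  rw [hcard]
  ring
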